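/- arXiv:1711.07688 — 2 statements merged into one kernel-verified Lean document; each statement's English description precedes it below -/
import Mathlib

section
/- The family (r_λ, K_λ)_{λ>−D̲} satisfies: (i) for all −D̲ < λ₁ < λ₂ and all x, y ∈ S, r_{λ₁}(x) > r_{λ₂}(x) and K_{λ₁}(x,y) ≥ K_{λ₂}(x,y); (ii) for every λ₀ > −D̲, ‖r_λ − r_{λ₀}‖_∞ → 0 and ‖K_λ − K_{λ₀}‖_∞ → 0 as λ → λ₀; (iii) the map λ ↦ r̄_λ := max_{x∈S} r_λ(x) is continuous and strictly decreasing on (−D̲, +∞). -/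
open MeasureTheory Filter Topology

/-- Continuity of the primitive on `Ici 0`. -/
lemma prim_contOn {f : ℝ → ℝ} (hf : ContinuousOn f (Set.Ici 0)) :
    ContinuousOn (fun a => ∫ t in (0:ℝ)..a, f t) (Set.Ici 0) := by
  intro a₀ ha₀
  have ha₀' : (0:ℝ) ≤ a₀ := ha₀
  have hint : IntegrableOn f (Set.uIcc 0 (a₀ + 1)) := by
    rw [Set.uIcc_of_le (by linarith)]
    exact (hf.mono (Set.Icc_subset_Ici_self)).integrableOn_compact isCompact_Icc
  have h1 : ContinuousOn (fun a => ∫ t in (0:ℝ)..a, f t) (Set.uIcc 0 (a₀ + 1)) :=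
    intervalIntegral.continuousOn_primitive_interval hint
  have h2 : ContinuousWithinAt (fun a => ∫ t in (0:ℝ)..a, f t) (Set.uIcc 0 (a₀+1)) a₀ :=
    h1 a₀ (by rw [Set.uIcc_of_le (by linarith)]; exact ⟨ha₀', by linarith⟩)
  apply h2.mono_of_mem_nhdsWithin
  rw [Set.uIcc_of_le (by linarith)]
  have : Set.Icc (0:ℝ) (a₀+1) = Set.Ici 0 ∩ Set.Iic (a₀+1) := (Set.Ici_inter_Iic).symm
  rw [this]
  exact Filter.inter_mem self_mem_nhdsWithin
    (mem_nhdsWithin_of_mem_nhds (Iic_mem_nhds (by linarith)))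

/-- Lower bound for the primitive. -/
lemma prim_lb {f : ℝ → ℝ} {c a : ℝ} (ha : 0 ≤ a) (hf : ContinuousOn f (Set.Ici 0))
    (hc : ∀ t ∈ Set.Ici (0:ℝ), c ≤ f t) : c * a ≤ ∫ t in (0:ℝ)..a, f t := by
  have hfi : IntervalIntegrable f volume 0 a :=
    (hf.mono (by rw [Set.uIcc_of_le ha]; exact Set.Icc_subset_Ici_self)).intervalIntegrable
  have h := intervalIntegral.integral_mono_on ha (intervalIntegrable_const (c := c)) hfi
    (fun t ht => hc t ht.1)
  rw [mul_comm]; simpa using h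

/-- `|exp t - 1| ≤ |t| * exp |t|`. -/
lemma abs_exp_sub_one_le' (t : ℝ) : |Real.exp t - 1| ≤ |t| * Real.exp |t| := by
  have hprod : Real.exp (-t) * Real.exp t = 1 := by rw [← Real.exp_add]; simp
  rcases le_or_gt 0 t with ht | ht
  · rw [abs_of_nonneg ht, abs_of_nonneg (by simpa using Real.one_le_exp ht)]
    have h1 : 1 - t ≤ Real.exp (-t) := by linarith [Real.add_one_le_exp (-t)]
    nlinarith [mul_le_mul_of_nonneg_right h1 (Real.exp_pos t).le]
  · rw [abs_of_neg ht, abs_of_nonpos (by simpa using Real.exp_le_one_iff.mpr ht.le)]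
    have h1 : t + 1 ≤ Real.exp t := Real.add_one_le_exp t
    have h2 : (1:ℝ) ≤ Real.exp (-t) := Real.one_le_exp (by linarith)
    nlinarith

/-- Integrability of `a * exp (-(δ a))` on `Ioi 0`. -/
lemma lin_exp_integrable {δ : ℝ} (hδ : 0 < δ) :
    IntegrableOn (fun a => a * Real.exp (-(δ * a))) (Set.Ioi (0:ℝ)) := by
  have hδ2 : (0:ℝ) < δ/2 := by positivity
  have hbd : ∀ x ∈ Set.Ioi (0:ℝ),
      ‖x * Real.exp (-(δ * x))‖ ≤ 2/δ * Real.exp (-(δ/2) * x) := by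
    intro a ha
    have ha' : (0:ℝ) < a := ha
    have h1 : δ/2 * a ≤ Real.exp (δ/2 * a) := (Real.add_one_le_exp _).trans' (by linarith)
    have hinv : (2/δ) * (δ/2) = 1 := by field_simp
    have h2 : a ≤ (2/δ) * Real.exp (δ/2 * a) := by
      nlinarith [mul_le_mul_of_nonneg_left h1 (by positivity : (0:ℝ) ≤ 2/δ)]
    have h3 : Real.exp (δ/2*a) * Real.exp (-(δ*a)) = Real.exp (-(δ/2) * a) := by
      rw [← Real.exp_add]; ring_nf
    rw [Real.norm_eq_abs, abs_of_nonneg (by positivity)]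
    calc a * Real.exp (-(δ*a)) ≤ (2/δ) * Real.exp (δ/2*a) * Real.exp (-(δ*a)) :=
          mul_le_mul_of_nonneg_right h2 (Real.exp_pos _).le
      _ = 2/δ * Real.exp (-(δ/2) * a) := by rw [mul_assoc, h3]
  apply Integrable.mono' ((exp_neg_integrableOn_Ioi 0 hδ2).const_mul (2/δ))
  · exact (continuous_id.mul (Real.continuous_exp.comp
      (continuous_const.mul continuous_id).neg)).aestronglyMeasurable
  · exact (ae_restrict_iff' measurableSet_Ioi).2 (Filter.Eventually.of_forall hbd)

/-- A nonnegative continuous function, positive at a point `a₁ > 0`, has positive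
integral on `Ioi 0`. -/
lemma pos_integral_of_pos_at {f : ℝ → ℝ} (hf : ContinuousOn f (Set.Ici 0))
    (hnn : ∀ a ∈ Set.Ioi (0:ℝ), 0 ≤ f a) (hint : IntegrableOn f (Set.Ioi 0))
    {a₁ : ℝ} (ha₁ : 0 < a₁) (hpos : 0 < f a₁) :
    0 < ∫ a in Set.Ioi (0:ℝ), f a := by
  have hca : ContinuousAt f a₁ :=
    (hf a₁ (le_of_lt ha₁)).continuousAt (Ici_mem_nhds ha₁)
  have hev : ∀ᶠ a in 𝓝 a₁, f a₁ / 2 < f a := hca.eventually (eventually_gt_nhds (by linarith))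
  obtain ⟨ε, hε, hball⟩ := Metric.eventually_nhds_iff.mp hev
  set ε' := min (ε/2) (a₁/2) with hε'def
  have hε' : 0 < ε' := lt_min (by linarith) (by linarith)
  have hsub : Set.Icc (a₁ - ε') (a₁ + ε') ⊆ Set.Ioi (0:ℝ) := by
    intro t ht
    have : ε' ≤ a₁/2 := min_le_right _ _
    have := ht.1
    simp only [Set.mem_Ioi]
    linarith
  have hlow : ∀ t ∈ Set.Icc (a₁ - ε') (a₁ + ε'), f a₁ / 2 ≤ f t := by
    intro t ht
    have h1 : ε' ≤ ε/2 := min_le_left _ _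
    have : dist t a₁ < ε := by
      rw [Real.dist_eq, abs_lt]
      constructor <;> [linarith [ht.1]; linarith [ht.2]]
    exact (hball this).le
  have hIccInt : IntegrableOn f (Set.Icc (a₁ - ε') (a₁ + ε')) := hint.mono_set hsub
  have h1 : f a₁ / 2 * (volume (Set.Icc (a₁ - ε') (a₁ + ε'))).toReal
      ≤ ∫ t in Set.Icc (a₁ - ε') (a₁ + ε'), f t :=
    setIntegral_ge_of_const_le_real measurableSet_Icc (by simp) hlow hIccInt
  have hvol : (volume (Set.Icc (a₁ - ε') (a₁ + ε'))).toReal = 2 * ε' := by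
    rw [Real.volume_Icc]
    rw [ENNReal.toReal_ofReal (by linarith)]
    ring
  have h2 : ∫ t in Set.Icc (a₁ - ε') (a₁ + ε'), f t ≤ ∫ a in Set.Ioi (0:ℝ), f a := by
    apply setIntegral_mono_set hint
    · exact (ae_restrict_iff' measurableSet_Ioi).2 (Filter.Eventually.of_forall hnn)
    · exact Filter.Eventually.of_forall hsub
  have : 0 < f a₁ / 2 * (2 * ε') := by positivity
  rw [hvol] at h1
  linarith

/-- R_λ(x,a) = exp(−∫₀ᵃ D(x,α)dα − λa). -/
noncomputable def Rfun {d : ℕ} (D : EuclideanSpace ℝ (Fin d) → ℝ → ℝ) (lam : ℝ)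
    (x : EuclideanSpace ℝ (Fin d)) (a : ℝ) : ℝ :=
  Real.exp (-(∫ α in (0:ℝ)..a, D x α) - lam * a)

/-- r_λ(x) = (1−p)∫₀^∞ B(x,a)R_λ(x,a)da. -/
noncomputable def rfun {d : ℕ} (B D : EuclideanSpace ℝ (Fin d) → ℝ → ℝ) (p lam : ℝ)
    (x : EuclideanSpace ℝ (Fin d)) : ℝ :=
  (1 - p) * ∫ a in Set.Ioi (0:ℝ), B x a * Rfun D lam x a

/-- K_λ(x,y) = p∫₀^∞ B(x,a)k(x,a,y)R_λ(x,a)da. -/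
noncomputable def Kfun {d : ℕ} (B D : EuclideanSpace ℝ (Fin d) → ℝ → ℝ)
    (k : EuclideanSpace ℝ (Fin d) → ℝ → EuclideanSpace ℝ (Fin d) → ℝ) (p lam : ℝ)
    (x y : EuclideanSpace ℝ (Fin d)) : ℝ :=
  p * ∫ a in Set.Ioi (0:ℝ), B x a * k x a y * Rfun D lam x a

/-- Monotonicity and continuity of the family (r_λ, K_λ): (i) strict/weak monotonicity in λ,
(ii) uniform convergence as λ → λ₀, (iii) λ ↦ r̄_λ = max_S r_λ is continuous and strictly
decreasing on (−D̲, ∞). -/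
theorem stmt13 {d : ℕ}
    (Ω S : Set (EuclideanSpace ℝ (Fin d)))
    (hΩne : Ω.Nonempty) (hΩopen : IsOpen Ω) (hΩbdd : Bornology.IsBounded Ω)
    (hΩconn : IsConnected Ω) (hSdef : S = closure Ω) (hScomp : IsCompact S)
    (B D : EuclideanSpace ℝ (Fin d) → ℝ → ℝ)
    (hBcont : ContinuousOn (fun q : EuclideanSpace ℝ (Fin d) × ℝ => B q.1 q.2)
      (S ×ˢ Set.Ici 0))
    (hBbd : ∃ C, ∀ x ∈ S, ∀ a ∈ Set.Ici (0:ℝ), B x a ≤ C)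
    (hBnn : ∀ x ∈ S, ∀ a ∈ Set.Ici (0:ℝ), 0 ≤ B x a)
    (Dlow : ℝ) (hDlow : 0 < Dlow)
    (hDcont : ContinuousOn (fun q : EuclideanSpace ℝ (Fin d) × ℝ => D q.1 q.2)
      (S ×ˢ Set.Ici 0))
    (hDbd : ∃ C, ∀ x ∈ S, ∀ a ∈ Set.Ici (0:ℝ), D x a ≤ C)
    (hDlb : ∀ x ∈ S, ∀ a ∈ Set.Ici (0:ℝ), Dlow ≤ D x a)
    (k : EuclideanSpace ℝ (Fin d) → ℝ → EuclideanSpace ℝ (Fin d) → ℝ)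
    (hkcont : ContinuousOn
      (fun q : EuclideanSpace ℝ (Fin d) × ℝ × EuclideanSpace ℝ (Fin d) => k q.1 q.2.1 q.2.2)
      (S ×ˢ (Set.Ici 0 ×ˢ S)))
    (hkbd : ∃ C, ∀ x ∈ S, ∀ a ∈ Set.Ici (0:ℝ), ∀ y ∈ S, k x a y ≤ C)
    (hknn : ∀ x ∈ S, ∀ a ∈ Set.Ici (0:ℝ), ∀ y ∈ S, 0 ≤ k x a y)
    (p : ℝ) (hp : p ∈ Set.Ioo (0:ℝ) 1)
    (ε₀ : ℝ) (hε₀ : 0 < ε₀) (I : Set ℝ) (hI : I ⊆ Set.Ici 0)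
    (hIint : (interior I).Nonempty)
    (hA4 : ∀ x ∈ S, ∀ y ∈ S, dist y x < ε₀ →
      I ⊆ tsupport (fun a => k x a y) ∩ tsupport (fun a => B x a))
    :
    (∀ lam₁ lam₂ : ℝ, -Dlow < lam₁ → lam₁ < lam₂ → ∀ x ∈ S, ∀ y ∈ S,
      rfun B D p lam₂ x < rfun B D p lam₁ x ∧
      Kfun B D k p lam₂ x y ≤ Kfun B D k p lam₁ x y) ∧
    (∀ lam₀ : ℝ, -Dlow < lam₀ →
      Tendsto (fun lam => ⨆ x : S, |rfun B D p lam (x : EuclideanSpace ℝ (Fin d)) -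
          rfun B D p lam₀ (x : EuclideanSpace ℝ (Fin d))|)
        (𝓝[Set.Ioi (-Dlow)] lam₀) (𝓝 0) ∧
      Tendsto (fun lam => ⨆ x : S, ⨆ y : S,
          |Kfun B D k p lam (x : EuclideanSpace ℝ (Fin d)) (y : EuclideanSpace ℝ (Fin d)) -
            Kfun B D k p lam₀ (x : EuclideanSpace ℝ (Fin d)) (y : EuclideanSpace ℝ (Fin d))|)
        (𝓝[Set.Ioi (-Dlow)] lam₀) (𝓝 0)) ∧
    (ContinuousOn (fun lam => ⨆ x : S, rfun B D p lam (x : EuclideanSpace ℝ (Fin d)))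
      (Set.Ioi (-Dlow)) ∧
    StrictAntiOn (fun lam => ⨆ x : S, rfun B D p lam (x : EuclideanSpace ℝ (Fin d)))
      (Set.Ioi (-Dlow))) := by
  obtain ⟨CB, hCB⟩ := hBbd
  obtain ⟨Ck, hCk⟩ := hkbd
  obtain ⟨CD, hCD⟩ := hDbd
  have hSne : S.Nonempty := by rw [hSdef]; exact hΩne.closure
  haveI : Nonempty S := hSne.to_subtype
  obtain ⟨x₀, hx₀⟩ := id hSne
  have hp0 : 0 < p := hp.1
  have hp1 : p < 1 := hp.2
  have hCB0 : 0 ≤ CB := le_trans (hBnn x₀ hx₀ 0 Set.self_mem_Ici) (hCB x₀ hx₀ 0 Set.self_mem_Ici)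
  have hCk0 : 0 ≤ Ck := le_trans (hknn x₀ hx₀ 0 Set.self_mem_Ici x₀ hx₀) (hCk x₀ hx₀ 0 Set.self_mem_Ici x₀ hx₀)
  -- slice continuity
  have hDx : ∀ x ∈ S, ContinuousOn (fun a => D x a) (Set.Ici 0) := by
    intro x hx
    exact hDcont.comp ((continuous_const.prodMk continuous_id).continuousOn)
      (fun a ha => ⟨hx, ha⟩)
  have hBx : ∀ x ∈ S, ContinuousOn (fun a => B x a) (Set.Ici 0) := by
    intro x hx
    exact hBcont.comp ((continuous_const.prodMk continuous_id).continuousOn)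
      (fun a ha => ⟨hx, ha⟩)
  have hkx : ∀ x ∈ S, ∀ y ∈ S, ContinuousOn (fun a => k x a y) (Set.Ici 0) := by
    intro x hx y hy
    exact hkcont.comp
      ((continuous_const.prodMk (continuous_id.prodMk continuous_const)).continuousOn)
      (fun a ha => ⟨hx, ha, hy⟩)
  have hprim : ∀ x ∈ S, ContinuousOn (fun a => ∫ t in (0:ℝ)..a, D x t) (Set.Ici 0) :=
    fun x hx => prim_contOn (hDx x hx)
  have hprimlb : ∀ x ∈ S, ∀ a : ℝ, 0 ≤ a → Dlow * a ≤ ∫ t in (0:ℝ)..a, D x t :=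
    fun x hx a ha => prim_lb ha (hDx x hx) (hDlb x hx)
  have hRpos : ∀ lam x a, 0 < Rfun D lam x a := fun lam x a => Real.exp_pos _
  have hRle : ∀ lam, ∀ x ∈ S, ∀ a : ℝ, 0 ≤ a →
      Rfun D lam x a ≤ Real.exp (-(Dlow + lam) * a) := by
    intro lam x hx a ha
    apply Real.exp_le_exp.mpr
    have := hprimlb x hx a ha
    nlinarith
  have hRa : ∀ lam, ∀ x ∈ S, ContinuousOn (fun a => Rfun D lam x a) (Set.Ici 0) := by
    intro lam x hx
    exact Real.continuous_exp.comp_continuousOn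
      (((hprim x hx).neg).sub ((continuous_const.mul continuous_id).continuousOn))
  have hga : ∀ lam, ∀ x ∈ S, ContinuousOn (fun a => B x a * Rfun D lam x a) (Set.Ici 0) :=
    fun lam x hx => (hBx x hx).mul (hRa lam x hx)
  have hgka : ∀ lam, ∀ x ∈ S, ∀ y ∈ S,
      ContinuousOn (fun a => B x a * k x a y * Rfun D lam x a) (Set.Ici 0) :=
    fun lam x hx y hy => ((hBx x hx).mul (hkx x hx y hy)).mul (hRa lam x hx)
  have hgint : ∀ lam, -Dlow < lam → ∀ x ∈ S,
      IntegrableOn (fun a => B x a * Rfun D lam x a) (Set.Ioi 0) := by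
    intro lam hlam x hx
    have hDl : (0:ℝ) < Dlow + lam := by linarith
    apply Integrable.mono' ((exp_neg_integrableOn_Ioi 0 hDl).const_mul CB)
    · exact ((hga lam x hx).mono Set.Ioi_subset_Ici_self).aestronglyMeasurable measurableSet_Ioi
    · refine (ae_restrict_iff' measurableSet_Ioi).2 (.of_forall fun a ha => ?_)
      have ha' : (0:ℝ) ≤ a := le_of_lt ha
      rw [Real.norm_eq_abs, abs_of_nonneg (mul_nonneg (hBnn x hx a ha') (hRpos lam x a).le)]
      exact mul_le_mul (hCB x hx a ha') (hRle lam x hx a ha') (hRpos lam x a).le hCB0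
  have hgkint : ∀ lam, -Dlow < lam → ∀ x ∈ S, ∀ y ∈ S,
      IntegrableOn (fun a => B x a * k x a y * Rfun D lam x a) (Set.Ioi 0) := by
    intro lam hlam x hx y hy
    have hDl : (0:ℝ) < Dlow + lam := by linarith
    apply Integrable.mono' ((exp_neg_integrableOn_Ioi 0 hDl).const_mul (CB * Ck))
    · exact ((hgka lam x hx y hy).mono Set.Ioi_subset_Ici_self).aestronglyMeasurable
        measurableSet_Ioi
    · refine (ae_restrict_iff' measurableSet_Ioi).2 (.of_forall fun a ha => ?_)
      have ha' : (0:ℝ) ≤ a := le_of_lt ha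
      rw [Real.norm_eq_abs, abs_of_nonneg (mul_nonneg
        (mul_nonneg (hBnn x hx a ha') (hknn x hx a ha' y hy)) (hRpos lam x a).le)]
      exact mul_le_mul
        (mul_le_mul (hCB x hx a ha') (hCk x hx a ha' y hy) (hknn x hx a ha' y hy) hCB0)
        (hRle lam x hx a ha') (hRpos lam x a).le (mul_nonneg hCB0 hCk0)
  -- part (i)
  have hmono : ∀ lam₁ lam₂ : ℝ, -Dlow < lam₁ → lam₁ < lam₂ → ∀ x ∈ S, ∀ y ∈ S,
      rfun B D p lam₂ x < rfun B D p lam₁ x ∧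
      Kfun B D k p lam₂ x y ≤ Kfun B D k p lam₁ x y := by
    intro lam₁ lam₂ h1 h2 x hx y hy
    have hlam₂ : -Dlow < lam₂ := h1.trans h2
    have hRlt : ∀ a : ℝ, 0 < a → Rfun D lam₂ x a < Rfun D lam₁ x a := by
      intro a ha
      apply Real.exp_lt_exp.mpr
      nlinarith
    have hRle2 : ∀ a : ℝ, 0 ≤ a → Rfun D lam₂ x a ≤ Rfun D lam₁ x a := by
      intro a ha
      apply Real.exp_le_exp.mpr
      nlinarith
    constructor
    · -- strict for rfun
      obtain ⟨a₀, ha₀⟩ := hIint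
      have ha₀I : a₀ ∈ I := interior_subset ha₀
      obtain ⟨η, hη, hballI⟩ := Metric.isOpen_iff.mp isOpen_interior a₀ ha₀
      have ha₀pos : 0 < a₀ := by
        by_contra hcon
        push_neg at hcon
        have hmem : a₀ - η/2 ∈ Metric.ball a₀ η := by
          simp only [Metric.mem_ball, Real.dist_eq]
          have heq2 : a₀ - η/2 - a₀ = -(η/2) := by ring
          rw [heq2, abs_neg, abs_of_nonneg (by linarith)]
          linarith
        have : a₀ - η/2 ∈ Set.Ici (0:ℝ) := hI (interior_subset (hballI hmem))
        simp only [Set.mem_Ici] at this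
        linarith
      have hA4x := hA4 x hx x hx (by simpa using hε₀)
      have ha₀supp : a₀ ∈ tsupport (fun a => B x a) := (hA4x ha₀I).2
      rw [tsupport] at ha₀supp
      obtain ⟨a₁, ha₁Ioi, ha₁supp⟩ :=
        mem_closure_iff.mp ha₀supp (Set.Ioi 0) isOpen_Ioi ha₀pos
      have ha₁pos : (0:ℝ) < a₁ := ha₁Ioi
      have hBa₁ : 0 < B x a₁ :=
        lt_of_le_of_ne (hBnn x hx a₁ ha₁pos.le) (Ne.symm ha₁supp)
      have hdiffpos : 0 < ∫ a in Set.Ioi (0:ℝ),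
          (B x a * Rfun D lam₁ x a - B x a * Rfun D lam₂ x a) := by
        apply pos_integral_of_pos_at ((hga lam₁ x hx).sub (hga lam₂ x hx))
          (fun a ha => by
            have := hRle2 a (le_of_lt ha)
            have := hBnn x hx a (Set.mem_Ici.mpr (le_of_lt (Set.mem_Ioi.mp ha)))
            simp only [Pi.sub_apply]
            nlinarith)
          ((hgint lam₁ h1 x hx).sub (hgint lam₂ hlam₂ x hx)) ha₁pos
        have := hRlt a₁ ha₁pos
        simp only [Pi.sub_apply]
        nlinarith
      have heq : rfun B D p lam₁ x - rfun B D p lam₂ x = (1-p) * ∫ a in Set.Ioi (0:ℝ),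
          (B x a * Rfun D lam₁ x a - B x a * Rfun D lam₂ x a) := by
        rw [integral_sub (hgint lam₁ h1 x hx) (hgint lam₂ hlam₂ x hx)]
        simp only [rfun]
        ring
      nlinarith
    · -- Kfun
      have hint : ∫ a in Set.Ioi (0:ℝ), B x a * k x a y * Rfun D lam₂ x a
          ≤ ∫ a in Set.Ioi (0:ℝ), B x a * k x a y * Rfun D lam₁ x a := by
        apply setIntegral_mono_on (hgkint lam₂ hlam₂ x hx y hy) (hgkint lam₁ h1 x hx y hy)
          measurableSet_Ioi
        intro a ha
        have ha' : (0:ℝ) ≤ a := le_of_lt ha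
        exact mul_le_mul_of_nonneg_left (hRle2 a ha')
          (mul_nonneg (hBnn x hx a ha') (hknn x hx a ha' y hy))
      simp only [Kfun]
      exact mul_le_mul_of_nonneg_left hint hp0.le
  -- key pointwise estimate for R
  have hkey : ∀ lam₀ : ℝ, -Dlow < lam₀ → ∀ lam : ℝ, |lam - lam₀| ≤ (Dlow+lam₀)/2 →
      ∀ x ∈ S, ∀ a : ℝ, 0 < a →
      |Rfun D lam x a - Rfun D lam₀ x a|
        ≤ |lam - lam₀| * (a * Real.exp (-((Dlow+lam₀)/2 * a))) := by
    intro lam₀ hlam₀ lam hcl x hx a ha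
    have hδ : 0 < (Dlow+lam₀)/2 := by linarith
    have hfac : Rfun D lam x a = Rfun D lam₀ x a * Real.exp (-((lam - lam₀)*a)) := by
      simp only [Rfun, ← Real.exp_add]
      ring_nf
    rw [hfac]
    have hre : Rfun D lam₀ x a * Real.exp (-((lam-lam₀)*a)) - Rfun D lam₀ x a
        = Rfun D lam₀ x a * (Real.exp (-((lam-lam₀)*a)) - 1) := by ring
    rw [hre, abs_mul, abs_of_pos (hRpos lam₀ x a)]
    have h1 : |Real.exp (-((lam-lam₀)*a)) - 1|
        ≤ |(lam-lam₀)*a| * Real.exp |(lam-lam₀)*a| := by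
      simpa [abs_neg] using abs_exp_sub_one_le' (-((lam-lam₀)*a))
    have h2 : |(lam-lam₀)*a| = |lam-lam₀| * a := by
      rw [abs_mul, abs_of_pos ha]
    have h3 : Real.exp |(lam-lam₀)*a| ≤ Real.exp ((Dlow+lam₀)/2 * a) := by
      apply Real.exp_le_exp.mpr
      rw [h2]
      exact mul_le_mul_of_nonneg_right hcl ha.le
    have h5 : Rfun D lam₀ x a ≤ Real.exp (-(Dlow + lam₀) * a) := hRle lam₀ x hx a ha.le
    have h6 : |Real.exp (-((lam-lam₀)*a)) - 1|
        ≤ (|lam-lam₀| * a) * Real.exp ((Dlow+lam₀)/2 * a) := by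
      calc |Real.exp (-((lam-lam₀)*a)) - 1| ≤ |(lam-lam₀)*a| * Real.exp |(lam-lam₀)*a| := h1
        _ ≤ (|lam-lam₀| * a) * Real.exp ((Dlow+lam₀)/2 * a) := by
            rw [h2] at h3 ⊢
            exact mul_le_mul_of_nonneg_left h3 (by positivity)
    have hE : Real.exp (-(Dlow+lam₀) * a) * Real.exp ((Dlow+lam₀)/2 * a)
        = Real.exp (-((Dlow+lam₀)/2 * a)) := by
      rw [← Real.exp_add]
      congr 1
      ring
    calc Rfun D lam₀ x a * |Real.exp (-((lam-lam₀)*a)) - 1|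
        ≤ Real.exp (-(Dlow+lam₀) * a) * ((|lam-lam₀| * a) * Real.exp ((Dlow+lam₀)/2 * a)) :=
          mul_le_mul h5 h6 (abs_nonneg _) (Real.exp_pos _).le
      _ = |lam-lam₀| * (a * Real.exp (-((Dlow+lam₀)/2 * a))) := by rw [← hE]; ring
  have hJint : ∀ lam₀ : ℝ, -Dlow < lam₀ →
      IntegrableOn (fun a => a * Real.exp (-((Dlow+lam₀)/2 * a))) (Set.Ioi (0:ℝ)) :=
    fun lam₀ h => lin_exp_integrable (by linarith)
  set J : ℝ → ℝ := fun lam₀ => ∫ a in Set.Ioi (0:ℝ), a * Real.exp (-((Dlow+lam₀)/2 * a))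
    with hJdef
  -- uniform Lipschitz-type estimates
  have hrdiff : ∀ lam₀ : ℝ, -Dlow < lam₀ → ∀ lam : ℝ, -Dlow < lam →
      |lam - lam₀| ≤ (Dlow+lam₀)/2 → ∀ x ∈ S,
      |rfun B D p lam x - rfun B D p lam₀ x| ≤ ((1-p) * CB * J lam₀) * |lam - lam₀| := by
    intro lam₀ hlam₀ lam hlam hcl x hx
    have key : |∫ a in Set.Ioi (0:ℝ), (B x a * Rfun D lam x a - B x a * Rfun D lam₀ x a)|
        ≤ CB * J lam₀ * |lam - lam₀| := by
      have h1 := norm_integral_le_integral_norm (μ := volume.restrict (Set.Ioi 0))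
        (fun a => B x a * Rfun D lam x a - B x a * Rfun D lam₀ x a)
      simp only [Real.norm_eq_abs] at h1
      have h2 : (∫ a in Set.Ioi (0:ℝ), |B x a * Rfun D lam x a - B x a * Rfun D lam₀ x a|)
          ≤ ∫ a in Set.Ioi (0:ℝ),
            (CB * |lam-lam₀|) * (a * Real.exp (-((Dlow+lam₀)/2 * a))) := by
        apply integral_mono_ae ((hgint lam hlam x hx).sub (hgint lam₀ hlam₀ x hx)).abs
          ((hJint lam₀ hlam₀).const_mul _)
        refine (ae_restrict_iff' measurableSet_Ioi).2 (.of_forall fun a ha => ?_)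
        have ha' : (0:ℝ) < a := ha
        have hfac : B x a * Rfun D lam x a - B x a * Rfun D lam₀ x a
            = B x a * (Rfun D lam x a - Rfun D lam₀ x a) := by ring
        simp only [Pi.sub_apply, hfac, abs_mul, abs_of_nonneg (hBnn x hx a ha'.le)]
        calc B x a * |Rfun D lam x a - Rfun D lam₀ x a|
            ≤ CB * (|lam-lam₀| * (a * Real.exp (-((Dlow+lam₀)/2 * a)))) :=
              mul_le_mul (hCB x hx a ha'.le) (hkey lam₀ hlam₀ lam hcl x hx a ha')
                (abs_nonneg _) hCB0
          _ = (CB * |lam-lam₀|) * (a * Real.exp (-((Dlow+lam₀)/2 * a))) := by ring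
      have h3 : (∫ a in Set.Ioi (0:ℝ),
            (CB * |lam-lam₀|) * (a * Real.exp (-((Dlow+lam₀)/2 * a))))
          = (CB * |lam-lam₀|) * J lam₀ :=
        integral_const_mul _ _
      calc |∫ a in Set.Ioi (0:ℝ), (B x a * Rfun D lam x a - B x a * Rfun D lam₀ x a)|
          ≤ ∫ a in Set.Ioi (0:ℝ), |B x a * Rfun D lam x a - B x a * Rfun D lam₀ x a| := h1
        _ ≤ (CB * |lam-lam₀|) * J lam₀ := h2.trans_eq h3
        _ = CB * J lam₀ * |lam - lam₀| := by ring
    have hsplit : rfun B D p lam x - rfun B D p lam₀ x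
        = (1-p) * ∫ a in Set.Ioi (0:ℝ),
            (B x a * Rfun D lam x a - B x a * Rfun D lam₀ x a) := by
      rw [integral_sub (hgint lam hlam x hx) (hgint lam₀ hlam₀ x hx)]
      simp only [rfun]
      ring
    rw [hsplit, abs_mul, abs_of_nonneg (by linarith : (0:ℝ) ≤ 1-p)]
    calc (1-p) * |∫ a in Set.Ioi (0:ℝ),
          (B x a * Rfun D lam x a - B x a * Rfun D lam₀ x a)|
        ≤ (1-p) * (CB * J lam₀ * |lam-lam₀|) :=
          mul_le_mul_of_nonneg_left key (by linarith)
      _ = ((1-p) * CB * J lam₀) * |lam - lam₀| := by ring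
  have hKdiff : ∀ lam₀ : ℝ, -Dlow < lam₀ → ∀ lam : ℝ, -Dlow < lam →
      |lam - lam₀| ≤ (Dlow+lam₀)/2 → ∀ x ∈ S, ∀ y ∈ S,
      |Kfun B D k p lam x y - Kfun B D k p lam₀ x y|
        ≤ (p * (CB * Ck) * J lam₀) * |lam - lam₀| := by
    intro lam₀ hlam₀ lam hlam hcl x hx y hy
    have key : |∫ a in Set.Ioi (0:ℝ),
          (B x a * k x a y * Rfun D lam x a - B x a * k x a y * Rfun D lam₀ x a)|
        ≤ (CB * Ck) * J lam₀ * |lam - lam₀| := by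
      have h1 := norm_integral_le_integral_norm (μ := volume.restrict (Set.Ioi 0))
        (fun a => B x a * k x a y * Rfun D lam x a - B x a * k x a y * Rfun D lam₀ x a)
      simp only [Real.norm_eq_abs] at h1
      have h2 : (∫ a in Set.Ioi (0:ℝ),
            |B x a * k x a y * Rfun D lam x a - B x a * k x a y * Rfun D lam₀ x a|)
          ≤ ∫ a in Set.Ioi (0:ℝ),
            ((CB * Ck) * |lam-lam₀|) * (a * Real.exp (-((Dlow+lam₀)/2 * a))) := by
        apply integral_mono_ae
          ((hgkint lam hlam x hx y hy).sub (hgkint lam₀ hlam₀ x hx y hy)).abs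
          ((hJint lam₀ hlam₀).const_mul _)
        refine (ae_restrict_iff' measurableSet_Ioi).2 (.of_forall fun a ha => ?_)
        have ha' : (0:ℝ) < a := ha
        have hfac : B x a * k x a y * Rfun D lam x a - B x a * k x a y * Rfun D lam₀ x a
            = B x a * k x a y * (Rfun D lam x a - Rfun D lam₀ x a) := by ring
        simp only [Pi.sub_apply, hfac, abs_mul,
          abs_of_nonneg (mul_nonneg (hBnn x hx a ha'.le) (hknn x hx a ha'.le y hy))]
        calc B x a * k x a y * |Rfun D lam x a - Rfun D lam₀ x a|
            ≤ (CB * Ck) * (|lam-lam₀| * (a * Real.exp (-((Dlow+lam₀)/2 * a)))) := by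
              apply mul_le_mul _ (hkey lam₀ hlam₀ lam hcl x hx a ha') (abs_nonneg _)
                (mul_nonneg hCB0 hCk0)
              exact mul_le_mul (hCB x hx a ha'.le) (hCk x hx a ha'.le y hy)
                (hknn x hx a ha'.le y hy) hCB0
          _ = ((CB * Ck) * |lam-lam₀|) * (a * Real.exp (-((Dlow+lam₀)/2 * a))) := by ring
      have h3 : (∫ a in Set.Ioi (0:ℝ),
            ((CB * Ck) * |lam-lam₀|) * (a * Real.exp (-((Dlow+lam₀)/2 * a))))
          = ((CB * Ck) * |lam-lam₀|) * J lam₀ :=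
        integral_const_mul _ _
      calc |∫ a in Set.Ioi (0:ℝ),
            (B x a * k x a y * Rfun D lam x a - B x a * k x a y * Rfun D lam₀ x a)|
          ≤ ∫ a in Set.Ioi (0:ℝ),
            |B x a * k x a y * Rfun D lam x a - B x a * k x a y * Rfun D lam₀ x a| := h1
        _ ≤ ((CB * Ck) * |lam-lam₀|) * J lam₀ := h2.trans_eq h3
        _ = (CB * Ck) * J lam₀ * |lam - lam₀| := by ring
    have hsplit : Kfun B D k p lam x y - Kfun B D k p lam₀ x y
        = p * ∫ a in Set.Ioi (0:ℝ),
            (B x a * k x a y * Rfun D lam x a - B x a * k x a y * Rfun D lam₀ x a) := by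
      rw [integral_sub (hgkint lam hlam x hx y hy) (hgkint lam₀ hlam₀ x hx y hy)]
      simp only [Kfun]
      ring
    rw [hsplit, abs_mul, abs_of_nonneg hp0.le]
    calc p * |∫ a in Set.Ioi (0:ℝ),
          (B x a * k x a y * Rfun D lam x a - B x a * k x a y * Rfun D lam₀ x a)|
        ≤ p * ((CB * Ck) * J lam₀ * |lam-lam₀|) := mul_le_mul_of_nonneg_left key hp0.le
      _ = (p * (CB * Ck) * J lam₀) * |lam - lam₀| := by ring
  -- eventual facts in the filter
  have hev : ∀ lam₀ : ℝ, -Dlow < lam₀ → ∀ᶠ lam in 𝓝[Set.Ioi (-Dlow)] lam₀,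
      -Dlow < lam ∧ |lam - lam₀| ≤ (Dlow+lam₀)/2 := by
    intro lam₀ hlam₀
    have h1 : ∀ᶠ lam in 𝓝 lam₀, |lam - lam₀| ≤ (Dlow+lam₀)/2 := by
      filter_upwards [Metric.closedBall_mem_nhds lam₀
        (show (0:ℝ) < (Dlow+lam₀)/2 by linarith)] with lam hm
      simpa [Real.dist_eq] using hm
    filter_upwards [self_mem_nhdsWithin, h1.filter_mono nhdsWithin_le_nhds] with lam hmem hcl
    exact ⟨hmem, hcl⟩
  have htendC : ∀ lam₀ c : ℝ,
      Tendsto (fun lam => c * |lam - lam₀|) (𝓝[Set.Ioi (-Dlow)] lam₀) (𝓝 0) := by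
    intro lam₀ c
    have h : Tendsto (fun lam : ℝ => c * |lam - lam₀|) (𝓝 lam₀) (𝓝 (c * |lam₀ - lam₀|)) :=
      (continuous_const.mul ((continuous_id.sub continuous_const).abs)).tendsto lam₀
    simp only [sub_self, abs_zero, mul_zero] at h
    exact h.mono_left nhdsWithin_le_nhds
  -- continuity of rfun in x on S
  have hrcont : ∀ lam : ℝ, -Dlow < lam → ContinuousOn (fun x => rfun B D p lam x) S := by
    intro lam hlam
    have hDl : (0:ℝ) < Dlow + lam := by linarith
    have hintc : ContinuousOn (fun x => ∫ a in Set.Ioi (0:ℝ), B x a * Rfun D lam x a) S := by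
      apply continuousOn_of_dominated (bound := fun a => CB * Real.exp (-(Dlow+lam) * a))
      · intro x hx
        exact ((hga lam x hx).mono Set.Ioi_subset_Ici_self).aestronglyMeasurable
          measurableSet_Ioi
      · intro x hx
        refine (ae_restrict_iff' measurableSet_Ioi).2 (.of_forall fun a ha => ?_)
        have ha' : (0:ℝ) ≤ a := le_of_lt ha
        rw [Real.norm_eq_abs, abs_of_nonneg (mul_nonneg (hBnn x hx a ha') (hRpos lam x a).le)]
        exact mul_le_mul (hCB x hx a ha') (hRle lam x hx a ha') (hRpos lam x a).le hCB0
      · exact (exp_neg_integrableOn_Ioi 0 hDl).const_mul CB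
      · refine (ae_restrict_iff' measurableSet_Ioi).2 (.of_forall fun a ha => ?_)
        have ha' : (0:ℝ) < a := ha
        have hBc : ContinuousOn (fun x => B x a) S :=
          hBcont.comp ((continuous_id.prodMk continuous_const).continuousOn)
            (fun x hx => ⟨hx, ha'.le⟩)
        have hprimc : ContinuousOn (fun x => ∫ t in Set.Ioc (0:ℝ) a, D x t) S := by
          apply continuousOn_of_dominated (bound := fun _ => CD)
          · intro x hx
            exact ((hDx x hx).mono (fun t ht => ht.1.le)).aestronglyMeasurable
              measurableSet_Ioc
          · intro x hx
            refine (ae_restrict_iff' measurableSet_Ioc).2 (.of_forall fun t ht => ?_)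
            rw [Real.norm_eq_abs, abs_of_nonneg (le_trans hDlow.le (hDlb x hx t ht.1.le))]
            exact hCD x hx t ht.1.le
          · refine (integrableOn_const_iff (by finiteness)).2 (Or.inr ?_)
            exact measure_Ioc_lt_top
          · refine (ae_restrict_iff' measurableSet_Ioc).2 (.of_forall fun t ht => ?_)
            exact hDcont.comp ((continuous_id.prodMk continuous_const).continuousOn)
              (fun x hx => ⟨hx, ht.1.le⟩)
        have hprimc' : ContinuousOn (fun x => ∫ t in (0:ℝ)..a, D x t) S :=
          hprimc.congr (fun x _ => intervalIntegral.integral_of_le ha'.le)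
        simp only [Rfun]
        exact hBc.mul (Real.continuous_exp.comp_continuousOn
          ((hprimc'.neg).sub continuousOn_const))
    simp only [rfun]
    exact continuousOn_const.mul hintc
  -- attainment of the sup
  have hattain : ∀ lam : ℝ, -Dlow < lam → ∃ xs ∈ S,
      (⨆ x : S, rfun B D p lam (x : EuclideanSpace ℝ (Fin d))) = rfun B D p lam xs ∧
      ∀ x ∈ S, rfun B D p lam x ≤ rfun B D p lam xs := by
    intro lam hlam
    obtain ⟨xs, hxsS, hxsmax⟩ := hScomp.exists_isMaxOn hSne (hrcont lam hlam)
    refine ⟨xs, hxsS, ?_, fun x hx => hxsmax hx⟩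
    apply le_antisymm
    · exact ciSup_le fun x => hxsmax x.2
    · exact le_ciSup ⟨rfun B D p lam xs, by rintro _ ⟨x, rfl⟩; exact hxsmax x.2⟩
        (⟨xs, hxsS⟩ : S)
  have hbdd : ∀ lam : ℝ, -Dlow < lam →
      BddAbove (Set.range fun x : S => rfun B D p lam (x : EuclideanSpace ℝ (Fin d))) := by
    intro lam hlam
    obtain ⟨xs, hxsS, -, hmax⟩ := hattain lam hlam
    exact ⟨rfun B D p lam xs, by rintro _ ⟨x, rfl⟩; exact hmax x x.2⟩
  refine ⟨hmono, ?_, ?_, ?_⟩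
  · -- part (ii)
    intro lam₀ hlam₀
    constructor
    · apply squeeze_zero' ?_ ?_ (htendC lam₀ ((1-p) * CB * J lam₀))
      · exact .of_forall fun lam => Real.iSup_nonneg fun x => abs_nonneg _
      · filter_upwards [hev lam₀ hlam₀] with lam h
        exact ciSup_le fun x => hrdiff lam₀ hlam₀ lam h.1 h.2 x x.2
    · apply squeeze_zero' ?_ ?_ (htendC lam₀ (p * (CB * Ck) * J lam₀))
      · exact .of_forall fun lam => Real.iSup_nonneg fun x =>
          Real.iSup_nonneg fun y => abs_nonneg _
      · filter_upwards [hev lam₀ hlam₀] with lam h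
        exact ciSup_le fun x => ciSup_le fun y =>
          hKdiff lam₀ hlam₀ lam h.1 h.2 x x.2 y y.2
  · -- continuity of the sup
    intro lam₀ hlam₀
    have hlam₀' : -Dlow < lam₀ := hlam₀
    set F : ℝ → ℝ := fun lam => ⨆ x : S, rfun B D p lam (x : EuclideanSpace ℝ (Fin d))
      with hFdef
    have hFev : ∀ᶠ lam in 𝓝[Set.Ioi (-Dlow)] lam₀,
        |F lam - F lam₀| ≤ ((1-p) * CB * J lam₀) * |lam - lam₀| := by
      filter_upwards [hev lam₀ hlam₀'] with lam h
      have hup : F lam ≤ F lam₀ + ((1-p) * CB * J lam₀) * |lam - lam₀| := by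
        apply ciSup_le
        intro x
        have h1 := hrdiff lam₀ hlam₀' lam h.1 h.2 x x.2
        have h2 : rfun B D p lam₀ (x : EuclideanSpace ℝ (Fin d)) ≤ F lam₀ :=
          le_ciSup (hbdd lam₀ hlam₀') x
        have := abs_le.mp h1
        linarith [this.2]
      have hdown : F lam₀ ≤ F lam + ((1-p) * CB * J lam₀) * |lam - lam₀| := by
        apply ciSup_le
        intro x
        have h1 := hrdiff lam₀ hlam₀' lam h.1 h.2 x x.2
        have h2 : rfun B D p lam (x : EuclideanSpace ℝ (Fin d)) ≤ F lam :=
          le_ciSup (hbdd lam h.1) x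
        have := abs_le.mp h1
        linarith [this.1]
      rw [abs_le]
      constructor <;> linarith
    have h0 : Tendsto (fun lam => F lam - F lam₀) (𝓝[Set.Ioi (-Dlow)] lam₀) (𝓝 0) := by
      apply squeeze_zero_norm' ?_ (htendC lam₀ ((1-p) * CB * J lam₀))
      filter_upwards [hFev] with lam h
      simpa [Real.norm_eq_abs] using h
    have h1 := h0.add_const (F lam₀)
    simp only [sub_add_cancel, zero_add] at h1
    exact h1
  · -- strict antitonicity of the sup
    intro lam₁ h1 lam₂ h2 hlt
    have h1' : -Dlow < lam₁ := h1
    have h2' : -Dlow < lam₂ := h2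
    obtain ⟨xs, hxsS, heq2, -⟩ := hattain lam₂ h2'
    obtain ⟨xt, hxtS, heq1, hmax1⟩ := hattain lam₁ h1'
    calc (⨆ x : S, rfun B D p lam₂ (x : EuclideanSpace ℝ (Fin d)))
        = rfun B D p lam₂ xs := heq2
      _ < rfun B D p lam₁ xs := (hmono lam₁ lam₂ h1' hlt xs hxsS xs hxsS).1
      _ ≤ rfun B D p lam₁ xt := hmax1 xs hxsS
      _ = ⨆ x : S, rfun B D p lam₁ (x : EuclideanSpace ℝ (Fin d)) := heq1.symm
end

section
/- Let (n_t)_{t≥0} be a family of finite positive Borel measures on S × ℝ₊, continuous in t for the bounded Lipschitz norm, satisfying the nonlinear weak formulation: for all f ∈ C_b^{1,0,1} and all t ≥ 0, ∫ f(t,x,a) n_t(dx,da) = ∫ f(0,x,a) n_0(dx,da) + ∫₀ᵗ ∫ (∂_s f(s,x,a) + ∂_a f(s,x,a) − (D(x,a) + c·n_s(S×ℝ₊)) f(s,x,a) + G[f(s,·,·)](x,a)) n_s(dx,da) ds. Set ρ(t) = n_t(S×ℝ₊) and define v_t := exp(c ∫₀ᵗ ρ(s) ds) · n_t. Then (v_t)_{t≥0}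 satisfies the linear weak formulation: for all f ∈ C_b^{1,0,1} and all t ≥ 0, ∫ f(t,x,a) v_t(dx,da) = ∫ f(0,x,a) v_0(dx,da) + ∫₀ᵗ ∫ (∂_s f(s,x,a) + ∂_a f(s,x,a) − D(x,a) f(s,x,a) + G[f(s,·,·)](x,a)) v_s(dx,da) ds, with v_0 = n_0. -/
open MeasureTheory Filter Topology

/-- G[g](x,a) = B(x,a)((1−p) g(x,0) + p ∫_S g(y,0) k(x,a,y) dy). -/
noncomputable def Gfun {d : ℕ} (S : Set (EuclideanSpace ℝ (Fin d)))
    (B : EuclideanSpace ℝ (Fin d) → ℝ → ℝ)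
    (k : EuclideanSpace ℝ (Fin d) → ℝ → EuclideanSpace ℝ (Fin d) → ℝ) (p : ℝ)
    (g : EuclideanSpace ℝ (Fin d) → ℝ → ℝ) (x : EuclideanSpace ℝ (Fin d)) (a : ℝ) : ℝ :=
  B x a * ((1 - p) * g x 0 + p * ∫ y in S, g y 0 * k x a y)

/-- f belongs to C_b^{1,0,1}(ℝ₊×S×ℝ₊) with ∂ₜf = fs and ∂ₐf = fa: f is continuous and
bounded, and its partial derivatives in the time and age variables exist, equal fs and fa,
and are continuous and bounded. -/
def MemCb101 {d : ℕ} (S : Set (EuclideanSpace ℝ (Fin d)))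
    (f fs fa : ℝ → EuclideanSpace ℝ (Fin d) → ℝ → ℝ) : Prop :=
  ContinuousOn (fun q : ℝ × EuclideanSpace ℝ (Fin d) × ℝ => f q.1 q.2.1 q.2.2)
    (Set.Ici 0 ×ˢ S ×ˢ Set.Ici 0) ∧
  (∃ C, ∀ t ∈ Set.Ici (0:ℝ), ∀ x ∈ S, ∀ a ∈ Set.Ici (0:ℝ), |f t x a| ≤ C) ∧
  (∀ t ∈ Set.Ici (0:ℝ), ∀ x ∈ S, ∀ a ∈ Set.Ici (0:ℝ),
    HasDerivAt (fun s => f s x a) (fs t x a) t) ∧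
  (∀ t ∈ Set.Ici (0:ℝ), ∀ x ∈ S, ∀ a ∈ Set.Ici (0:ℝ),
    HasDerivAt (fun b => f t x b) (fa t x a) a) ∧
  ContinuousOn (fun q : ℝ × EuclideanSpace ℝ (Fin d) × ℝ => fs q.1 q.2.1 q.2.2)
    (Set.Ici 0 ×ˢ S ×ˢ Set.Ici 0) ∧
  (∃ C, ∀ t ∈ Set.Ici (0:ℝ), ∀ x ∈ S, ∀ a ∈ Set.Ici (0:ℝ), |fs t x a| ≤ C) ∧
  ContinuousOn (fun q : ℝ × EuclideanSpace ℝ (Fin d) × ℝ => fa q.1 q.2.1 q.2.2)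
    (Set.Ici 0 ×ˢ S ×ˢ Set.Ici 0) ∧
  (∃ C, ∀ t ∈ Set.Ici (0:ℝ), ∀ x ∈ S, ∀ a ∈ Set.Ici (0:ℝ), |fa t x a| ≤ C)

/-- If (n_t) is a weak measure solution of the nonlinear equation, then
v_t = exp(c∫₀ᵗ ρ(s)ds)·n_t, with ρ(t) = n_t(S×ℝ₊), is a weak solution of the linear
equation, with v₀ = n₀. -/
theorem stmt19 {d : ℕ}
    (Ω S : Set (EuclideanSpace ℝ (Fin d)))
    (hΩne : Ω.Nonempty) (hΩopen : IsOpen Ω) (hΩbdd : Bornology.IsBounded Ω)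
    (hΩconn : IsConnected Ω) (hSdef : S = closure Ω) (hScomp : IsCompact S)
    (B D : EuclideanSpace ℝ (Fin d) → ℝ → ℝ)
    (hBcont : ContinuousOn (fun q : EuclideanSpace ℝ (Fin d) × ℝ => B q.1 q.2)
      (S ×ˢ Set.Ici 0))
    (hBbd : ∃ C, ∀ x ∈ S, ∀ a ∈ Set.Ici (0:ℝ), B x a ≤ C)
    (hBnn : ∀ x ∈ S, ∀ a ∈ Set.Ici (0:ℝ), 0 ≤ B x a)
    (Dlow : ℝ) (hDlow : 0 < Dlow)
    (hDcont : ContinuousOn (fun q : EuclideanSpace ℝ (Fin d) × ℝ => D q.1 q.2)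
      (S ×ˢ Set.Ici 0))
    (hDbd : ∃ C, ∀ x ∈ S, ∀ a ∈ Set.Ici (0:ℝ), D x a ≤ C)
    (hDlb : ∀ x ∈ S, ∀ a ∈ Set.Ici (0:ℝ), Dlow ≤ D x a)
    (k : EuclideanSpace ℝ (Fin d) → ℝ → EuclideanSpace ℝ (Fin d) → ℝ)
    (hkcont : ContinuousOn
      (fun q : EuclideanSpace ℝ (Fin d) × ℝ × EuclideanSpace ℝ (Fin d) => k q.1 q.2.1 q.2.2)
      (S ×ˢ (Set.Ici 0 ×ˢ S)))
    (hkbd : ∃ C, ∀ x ∈ S, ∀ a ∈ Set.Ici (0:ℝ), ∀ y ∈ S, k x a y ≤ C)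
    (hknn : ∀ x ∈ S, ∀ a ∈ Set.Ici (0:ℝ), ∀ y ∈ S, 0 ≤ k x a y)
    (p : ℝ) (hp : p ∈ Set.Ioo (0:ℝ) 1)
    (c : ℝ) (hc : 0 < c)
    (n : ℝ → Measure (EuclideanSpace ℝ (Fin d) × ℝ))
    (hnfin : ∀ t, IsFiniteMeasure (n t))
    (hnconc : ∀ t, n t (S ×ˢ Set.Ici 0)ᶜ = 0)
    (hBL : ∀ g : EuclideanSpace ℝ (Fin d) × ℝ → ℝ, (∃ C : NNReal, LipschitzWith C g) →
      (∃ C, ∀ q, |g q| ≤ C) → Continuous (fun t => ∫ q, g q ∂(n t)))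
    (hweak : ∀ f fs fa : ℝ → EuclideanSpace ℝ (Fin d) → ℝ → ℝ, MemCb101 S f fs fa →
      ∀ t : ℝ, 0 ≤ t →
        ∫ q : EuclideanSpace ℝ (Fin d) × ℝ, f t q.1 q.2 ∂(n t) =
          (∫ q : EuclideanSpace ℝ (Fin d) × ℝ, f 0 q.1 q.2 ∂(n 0)) +
          ∫ s in (0:ℝ)..t, (∫ q : EuclideanSpace ℝ (Fin d) × ℝ,
            (fs s q.1 q.2 + fa s q.1 q.2 -
              (D q.1 q.2 + c * ((n s) Set.univ).toReal) * f s q.1 q.2 +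
              Gfun S B k p (f s) q.1 q.2) ∂(n s))) :
    ∀ v : ℝ → Measure (EuclideanSpace ℝ (Fin d) × ℝ),
      (∀ t, v t = ENNReal.ofReal
          (Real.exp (c * ∫ s in (0:ℝ)..t, ((n s) Set.univ).toReal)) • n t) →
      v 0 = n 0 ∧
      (∀ f fs fa : ℝ → EuclideanSpace ℝ (Fin d) → ℝ → ℝ, MemCb101 S f fs fa →
        ∀ t : ℝ, 0 ≤ t →
          ∫ q : EuclideanSpace ℝ (Fin d) × ℝ, f t q.1 q.2 ∂(v t) =
            (∫ q : EuclideanSpace ℝ (Fin d) × ℝ, f 0 q.1 q.2 ∂(v 0)) +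
            ∫ s in (0:ℝ)..t, (∫ q : EuclideanSpace ℝ (Fin d) × ℝ,
              (fs s q.1 q.2 + fa s q.1 q.2 - D q.1 q.2 * f s q.1 q.2 +
                Gfun S B k p (f s) q.1 q.2) ∂(v s))) := by
  intro v hv
  have hρcont : Continuous (fun s : ℝ => ((n s) Set.univ).toReal) := by
    have h := hBL (fun _ => (1:ℝ)) ⟨0, LipschitzWith.const 1⟩ ⟨1, fun q => by simp⟩
    have heq : (fun t => ∫ _q : EuclideanSpace ℝ (Fin d) × ℝ, (1:ℝ) ∂(n t)) =
        fun s : ℝ => ((n s) Set.univ).toReal := by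
      funext t
      have := hnfin t
      simp [integral_const]
      rfl
    rwa [heq] at h
  set ρ : ℝ → ℝ := fun s => ((n s) Set.univ).toReal with hρdef
  have hρnn : ∀ s, 0 ≤ ρ s := fun s => ENNReal.toReal_nonneg
  have hI : ∀ s : ℝ, HasDerivAt (fun u => ∫ x in (0:ℝ)..u, ρ x) (ρ s) s := fun s =>
    intervalIntegral.integral_hasDerivAt_right (hρcont.intervalIntegrable _ _)
      hρcont.stronglyMeasurable.stronglyMeasurableAtFilter hρcont.continuousAt
  set E : ℝ → ℝ := fun s => Real.exp (c * ∫ x in (0:ℝ)..s, ρ x) with hEdef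
  have hEpos : ∀ s, 0 < E s := fun s => Real.exp_pos _
  have hE : ∀ s, HasDerivAt E (c * ρ s * E s) s := by
    intro s
    have h := ((hI s).const_mul c).exp
    have harr : Real.exp (c * ∫ x in (0:ℝ)..s, ρ x) * (c * ρ s) = c * ρ s * E s := by
      simp only [hEdef]; ring
    rw [harr] at h
    exact h
  have hEcont : Continuous E := continuous_iff_continuousAt.2 fun s => (hE s).continuousAt
  have hv0 : v 0 = n 0 := by
    have h := hv 0
    simpa [intervalIntegral.integral_same] using h
  have hv_int : ∀ (s : ℝ) (g : EuclideanSpace ℝ (Fin d) × ℝ → ℝ),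
      ∫ q, g q ∂(v s) = E s * ∫ q, g q ∂(n s) := by
    intro s g
    rw [hv s, integral_smul_measure, ENNReal.toReal_ofReal (Real.exp_nonneg _), smul_eq_mul]
  refine ⟨hv0, ?_⟩
  intro f fs fa hf t ht
  set e : ℝ → ℝ := fun s => if s ≤ t then E s
      else E t + c * ρ t * E t * (1 - Real.exp (t - s)) with hedef
  set e' : ℝ → ℝ := fun s => if s ≤ t then c * ρ s * E s
      else c * ρ t * E t * Real.exp (t - s) with he'def
  have hbr2 : ∀ s : ℝ, HasDerivAt (fun u => E t + c * ρ t * E t * (1 - Real.exp (t - u)))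
      (c * ρ t * E t * Real.exp (t - s)) s := by
    intro s
    have h1 : HasDerivAt (fun u : ℝ => t - u) (-1) s := (hasDerivAt_id s).const_sub t
    have h4 := (((h1.exp).const_sub 1).const_mul (c * ρ t * E t)).const_add (E t)
    exact h4.congr_deriv (by ring)
  have hety : e t = E t := by simp [hedef]
  have he : ∀ s, HasDerivAt e (e' s) s := by
    intro s
    rcases lt_trichotomy s t with hst | heqst | hst
    · have heq : e =ᶠ[𝓝 s] E := by
        filter_upwards [Iio_mem_nhds hst] with u hu
        simp [hedef, (Set.mem_Iio.mp hu).le]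
      have h := (hE s).congr_of_eventuallyEq heq
      simpa [he'def, le_of_lt hst] using h
    · subst heqst
      have h2 : HasDerivWithinAt e (c * ρ s * E s) (Set.Iic s) s :=
        ((hE s).hasDerivWithinAt).congr
          (fun u hu => by simp [hedef, Set.mem_Iic.mp hu]) hety
      have h3 : HasDerivWithinAt e (c * ρ s * E s) (Set.Ici s) s := by
        have hb := (hbr2 s).hasDerivWithinAt (s := Set.Ici s)
        simp only [sub_self, Real.exp_zero, mul_one] at hb
        refine hb.congr (fun u hu => ?_) ?_
        · rcases eq_or_lt_of_le (Set.mem_Ici.mp hu) with h | h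
          · simp [hedef, ← h]
          · simp [hedef, not_le.mpr h]
        · simp [hedef]
      have h4 := h2.union h3
      rw [Set.Iic_union_Ici, hasDerivWithinAt_univ] at h4
      simpa [he'def] using h4
    · have heq : e =ᶠ[𝓝 s] (fun u => E t + c * ρ t * E t * (1 - Real.exp (t - u))) := by
        filter_upwards [Ioi_mem_nhds hst] with u hu
        simp [hedef, not_le.mpr (Set.mem_Ioi.mp hu)]
      have h := (hbr2 s).congr_of_eventuallyEq heq
      simpa [he'def, not_le.mpr hst] using h
  have hecont : Continuous e := continuous_iff_continuousAt.2 fun s => (he s).continuousAt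
  have he'cont : Continuous e' := by
    rw [he'def]
    refine Continuous.if_le ?_ ?_ continuous_id continuous_const ?_
    · exact (continuous_const.mul hρcont).mul hEcont
    · exact continuous_const.mul (Real.continuous_exp.comp (continuous_const.sub continuous_id))
    · intro s hs
      subst hs
      simp
  obtain ⟨Cρ₀, hCρ₀⟩ := isCompact_Icc.exists_bound_of_continuousOn
    (hρcont.continuousOn : ContinuousOn ρ (Set.Icc 0 t))
  set Cρ : ℝ := max Cρ₀ 0 with hCρdef
  have hCρnn : 0 ≤ Cρ := le_max_right _ _
  have hρle : ∀ s ∈ Set.Icc (0:ℝ) t, ρ s ≤ Cρ := fun s hs =>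
    le_trans (le_trans (le_abs_self _) (hCρ₀ s hs)) (le_max_left _ _)
  set CE : ℝ := Real.exp (c * (Cρ * t)) with hCEdef
  have hCEpos : 0 < CE := Real.exp_pos _
  have hEle : ∀ s ∈ Set.Icc (0:ℝ) t, E s ≤ CE := by
    intro s hs
    simp only [hEdef, hCEdef]
    apply Real.exp_le_exp.2
    have hint : ‖∫ x in (0:ℝ)..s, ρ x‖ ≤ Cρ * |s - 0| := by
      apply intervalIntegral.norm_integral_le_of_norm_le_const
      intro x hx
      rw [Set.uIoc_of_le hs.1] at hx
      have hx' : x ∈ Set.Icc (0:ℝ) t := ⟨le_of_lt hx.1, le_trans hx.2 hs.2⟩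
      rw [Real.norm_eq_abs, abs_of_nonneg (hρnn x)]
      exact hρle x hx'
    have h1 : (∫ x in (0:ℝ)..s, ρ x) ≤ Cρ * t := by
      calc (∫ x in (0:ℝ)..s, ρ x) ≤ |∫ x in (0:ℝ)..s, ρ x| := le_abs_self _
        _ ≤ Cρ * |s - 0| := by rw [← Real.norm_eq_abs]; exact hint
        _ = Cρ * s := by rw [sub_zero, abs_of_nonneg hs.1]
        _ ≤ Cρ * t := by nlinarith [hs.2]
    exact mul_le_mul_of_nonneg_left h1 hc.le
  set Ce : ℝ := CE * (1 + c * Cρ) with hCedef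
  have hebd : ∀ s : ℝ, 0 ≤ s → |e s| ≤ Ce := by
    intro s hs
    by_cases hst : s ≤ t
    · have h1 : e s = E s := by simp [hedef, hst]
      rw [h1, abs_of_nonneg (hEpos s).le, hCedef]
      nlinarith [hEle s ⟨hs, hst⟩, mul_nonneg (mul_nonneg hCEpos.le hc.le) hCρnn]
    · have hts : t - s ≤ 0 := by linarith [not_le.mp hst]
      have hexp1 : Real.exp (t - s) ≤ 1 := Real.exp_le_one_iff.2 hts
      have hexp0 : 0 < Real.exp (t - s) := Real.exp_pos _
      have h1 : e s = E t + c * ρ t * E t * (1 - Real.exp (t - s)) := by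
        simp [hedef, hst]
      have hρtK : ρ t ≤ Cρ := hρle t ⟨ht, le_refl t⟩
      have hEtK : E t ≤ CE := hEle t ⟨ht, le_refl t⟩
      have hK : 0 ≤ c * ρ t * E t := mul_nonneg (mul_nonneg hc.le (hρnn t)) (hEpos t).le
      have h2 : c * ρ t * E t * (1 - Real.exp (t - s)) ≤ c * ρ t * E t := by
        nlinarith [mul_nonneg hK hexp0.le]
      have h3 : c * ρ t * E t ≤ c * Cρ * CE :=
        mul_le_mul (mul_le_mul_of_nonneg_left hρtK hc.le) hEtK (hEpos t).le
          (mul_nonneg hc.le hCρnn)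
      rw [h1, abs_of_nonneg, hCedef]
      · nlinarith [hEtK, h2, h3]
      · nlinarith [hEpos t, mul_nonneg hK (by linarith : (0:ℝ) ≤ 1 - Real.exp (t - s))]
  set Ce' : ℝ := c * Cρ * CE with hCe'def
  have he'bd : ∀ s : ℝ, 0 ≤ s → |e' s| ≤ Ce' := by
    intro s hs
    by_cases hst : s ≤ t
    · have h1 : e' s = c * ρ s * E s := by simp [he'def, hst]
      rw [h1, abs_of_nonneg (mul_nonneg (mul_nonneg hc.le (hρnn s)) (hEpos s).le), hCe'def]
      exact mul_le_mul (mul_le_mul_of_nonneg_left (hρle s ⟨hs, hst⟩) hc.le)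
        (hEle s ⟨hs, hst⟩) (hEpos s).le (mul_nonneg hc.le hCρnn)
    · have h1 : e' s = c * ρ t * E t * Real.exp (t - s) := by simp [he'def, hst]
      have hexp1 : Real.exp (t - s) ≤ 1 := Real.exp_le_one_iff.2 (by linarith [not_le.mp hst])
      rw [h1, abs_of_nonneg (mul_nonneg (mul_nonneg (mul_nonneg hc.le (hρnn t)) (hEpos t).le)
        (Real.exp_pos _).le), hCe'def]
      have hK : 0 ≤ c * ρ t * E t := mul_nonneg (mul_nonneg hc.le (hρnn t)) (hEpos t).le
      have h2 : c * ρ t * E t * Real.exp (t - s) ≤ c * ρ t * E t * 1 :=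
        mul_le_mul_of_nonneg_left hexp1 hK
      have h3 : c * ρ t * E t ≤ c * Cρ * CE :=
        mul_le_mul (mul_le_mul_of_nonneg_left (hρle t ⟨ht, le_refl t⟩) hc.le)
          (hEle t ⟨ht, le_refl t⟩) (hEpos t).le (mul_nonneg hc.le hCρnn)
      nlinarith [h2, h3]
  obtain ⟨hfc, ⟨Cf, hCf⟩, hfds, hfda, hfsc, ⟨Cfs, hCfs⟩, hfac, ⟨Cfa, hCfa⟩⟩ := hf
  have hCenn : 0 ≤ Ce := le_trans (abs_nonneg _) (hebd 0 le_rfl)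
  have hCe'nn : 0 ≤ Ce' := le_trans (abs_nonneg _) (he'bd 0 le_rfl)
  have hmem : MemCb101 S (fun s x a => e s * f s x a)
      (fun s x a => e' s * f s x a + e s * fs s x a) (fun s x a => e s * fa s x a) := by
    refine ⟨?_, ⟨Ce * Cf, ?_⟩, ?_, ?_, ?_, ⟨Ce' * Cf + Ce * Cfs, ?_⟩, ?_, ⟨Ce * Cfa, ?_⟩⟩
    · exact ((hecont.comp continuous_fst).continuousOn).mul hfc
    · intro τ hτ x hx a ha
      calc |e τ * f τ x a| = |e τ| * |f τ x a| := abs_mul _ _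
        _ ≤ Ce * Cf := mul_le_mul (hebd τ hτ) (hCf τ hτ x hx a ha) (abs_nonneg _) hCenn
    · intro τ hτ x hx a ha
      exact (he τ).mul (hfds τ hτ x hx a ha)
    · intro τ hτ x hx a ha
      exact (hfda τ hτ x hx a ha).const_mul (e τ)
    · exact (((he'cont.comp continuous_fst).continuousOn).mul hfc).add
        (((hecont.comp continuous_fst).continuousOn).mul hfsc)
    · intro τ hτ x hx a ha
      calc |e' τ * f τ x a + e τ * fs τ x a|
          ≤ |e' τ * f τ x a| + |e τ * fs τ x a| := abs_add_le _ _
        _ = |e' τ| * |f τ x a| + |e τ| * |fs τ x a| := by rw [abs_mul, abs_mul]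
        _ ≤ Ce' * Cf + Ce * Cfs := add_le_add
            (mul_le_mul (he'bd τ hτ) (hCf τ hτ x hx a ha) (abs_nonneg _) hCe'nn)
            (mul_le_mul (hebd τ hτ) (hCfs τ hτ x hx a ha) (abs_nonneg _) hCenn)
    · exact ((hecont.comp continuous_fst).continuousOn).mul hfac
    · intro τ hτ x hx a ha
      calc |e τ * fa τ x a| = |e τ| * |fa τ x a| := abs_mul _ _
        _ ≤ Ce * Cfa := mul_le_mul (hebd τ hτ) (hCfa τ hτ x hx a ha) (abs_nonneg _) hCenn
  have hGs : ∀ (r : ℝ) (g : EuclideanSpace ℝ (Fin d) → ℝ → ℝ)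
      (x : EuclideanSpace ℝ (Fin d)) (a : ℝ),
      Gfun S B k p (fun y b => r * g y b) x a = r * Gfun S B k p g x a := by
    intro r g x a
    simp only [Gfun, mul_assoc]
    rw [integral_const_mul]
    ring
  have key := hweak (fun s x a => e s * f s x a)
    (fun s x a => e' s * f s x a + e s * fs s x a) (fun s x a => e s * fa s x a) hmem t ht
  beta_reduce at key
  have hLt : (∫ q : EuclideanSpace ℝ (Fin d) × ℝ, e t * f t q.1 q.2 ∂(n t)) =
      ∫ q : EuclideanSpace ℝ (Fin d) × ℝ, f t q.1 q.2 ∂(v t) := by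
    rw [hv_int t, integral_const_mul, hety]
  have he0 : e 0 = 1 := by
    simp [hedef, ht, hEdef, intervalIntegral.integral_same]
  have hL0 : (∫ q : EuclideanSpace ℝ (Fin d) × ℝ, e 0 * f 0 q.1 q.2 ∂(n 0)) =
      ∫ q : EuclideanSpace ℝ (Fin d) × ℝ, f 0 q.1 q.2 ∂(v 0) := by
    rw [hv0]
    simp [he0]
  rw [hLt, hL0] at key
  rw [key]
  congr 1
  refine intervalIntegral.integral_congr fun s hs => ?_
  rw [Set.uIcc_of_le ht] at hs
  have hes : e s = E s := by simp [hedef, hs.2]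
  have he's : e' s = c * ρ s * E s := by simp [he'def, hs.2]
  have hρs : ((n s) Set.univ).toReal = ρ s := rfl
  rw [hv_int s, ← integral_const_mul]
  congr 1
  funext q
  beta_reduce
  rw [hGs (e s) (f s) q.1 q.2, hes, he's, hρs]
  ring
end
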